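/- Let d_0 = 1/6, d_1 = 2/3, d_2 = 1/6 and τ > 0 fixed. Suppose β_0(Δx), β_1(Δx) are positive functions of Δx with β_0/β_1 → 1 and β_0 → 0 as Δx → 0, while β_2 is a fixed positive constant and τ/β_2 remains bounded. Then the Z-type weights ω_0^Z = α_0/(α_0+α_1+α_2), α_k = d_k(1+(τ/β_k)^2), satisfy ω_0^Z → 1/5 and ω_1^Z → 4/5 and ω_2^Z → 0 as Δx → 0. -/

import Mathlib

open Filter

theorem stmt_10 (β0 β1 : ℝ → ℝ) (β2 τ : ℝ)
    (hpos : ∀ᶠ Δx in nhdsWithin (0:ℝ) (Set.Ioi 0), 0 < β0 Δx ∧ 0 < β1 Δx)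
    (hratio : Tendsto (fun Δx => β0 Δx / β1 Δx) (nhdsWithin (0:ℝ) (Set.Ioi 0)) (nhds 1))
    (h0 : Tendsto β0 (nhdsWithin (0:ℝ) (Set.Ioi 0)) (nhds 0))
    (hβ2 : 0 < β2) (hτ : 0 < τ) :
    let d0 : ℝ := 1/6; let d1 : ℝ := 2/3; let d2 : ℝ := 1/6
    let α0 : ℝ → ℝ := fun Δx => d0 * (1 + (τ / β0 Δx) ^ 2)
    let α1 : ℝ → ℝ := fun Δx => d1 * (1 + (τ / β1 Δx) ^ 2)
    let α2 : ℝ → ℝ := fun Δx => d2 * (1 + (τ / β2) ^ 2)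
    Tendsto (fun Δx => α0 Δx / (α0 Δx + α1 Δx + α2 Δx))
        (nhdsWithin (0:ℝ) (Set.Ioi 0)) (nhds (1/5)) ∧
    Tendsto (fun Δx => α1 Δx / (α0 Δx + α1 Δx + α2 Δx))
        (nhdsWithin (0:ℝ) (Set.Ioi 0)) (nhds (4/5)) ∧
    Tendsto (fun Δx => α2 Δx / (α0 Δx + α1 Δx + α2 Δx))
        (nhdsWithin (0:ℝ) (Set.Ioi 0)) (nhds 0) := by
  intro d0 d1 d2 α0 α1 α2
  set l := nhdsWithin (0:ℝ) (Set.Ioi 0) with hl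
  have hτ2 : (0:ℝ) < τ ^ 2 := by positivity
  have hsq : Tendsto (fun x => (β0 x) ^ 2) l (nhds 0) := by
    have := h0.pow 2
    simpa using this
  -- g0 = β0^2 * α0
  have hg0 : Tendsto (fun x => (β0 x) ^ 2 * α0 x) l (nhds (τ ^ 2 / 6)) := by
    have heq : ∀ᶠ x in l, (β0 x) ^ 2 * α0 x = d0 * ((β0 x) ^ 2 + τ ^ 2) := by
      filter_upwards [hpos] with x hx
      have h := hx.1.ne'
      simp only [α0, d0]
      field_simp
    have hlim : Tendsto (fun x => d0 * ((β0 x) ^ 2 + τ ^ 2)) l (nhds (τ ^ 2 / 6)) := by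
      have h := (hsq.add_const (τ ^ 2)).const_mul d0
      have he : d0 * (0 + τ ^ 2) = τ ^ 2 / 6 := by simp only [d0]; ring
      rwa [he] at h
    exact hlim.congr' (heq.mono fun x h => h.symm)
  have hg1 : Tendsto (fun x => (β0 x) ^ 2 * α1 x) l (nhds (2 / 3 * τ ^ 2)) := by
    have heq : ∀ᶠ x in l, (β0 x) ^ 2 * α1 x
        = d1 * ((β0 x) ^ 2 + τ ^ 2 * (β0 x / β1 x) ^ 2) := by
      filter_upwards [hpos] with x hx
      have h := hx.2.ne'
      simp only [α1, d1]
      field_simp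
    have hlim : Tendsto (fun x => d1 * ((β0 x) ^ 2 + τ ^ 2 * (β0 x / β1 x) ^ 2)) l
        (nhds (2 / 3 * τ ^ 2)) := by
      have h1 : Tendsto (fun x => (β0 x / β1 x) ^ 2) l (nhds 1) := by
        simpa using hratio.pow 2
      have h := (hsq.add ((h1.const_mul (τ ^ 2)))).const_mul d1
      have he : d1 * (0 + τ ^ 2 * 1) = 2 / 3 * τ ^ 2 := by simp only [d1]; ring
      rwa [he] at h
    exact hlim.congr' (heq.mono fun x h => h.symm)
  have hg2 : Tendsto (fun x => (β0 x) ^ 2 * α2 x) l (nhds 0) := by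
    have := hsq.mul_const (d2 * (1 + (τ / β2) ^ 2))
    simpa [α2] using this
  have hsum : Tendsto (fun x => (β0 x) ^ 2 * α0 x + (β0 x) ^ 2 * α1 x + (β0 x) ^ 2 * α2 x)
      l (nhds (5 / 6 * τ ^ 2)) := by
    have := (hg0.add hg1).add hg2
    convert this using 2
    ring
  have hden : (5 / 6 * τ ^ 2 : ℝ) ≠ 0 := by positivity
  have key : ∀ (g : ℝ → ℝ) (c : ℝ),
      Tendsto (fun x => (β0 x) ^ 2 * g x) l (nhds c) →
      Tendsto (fun x => g x / (α0 x + α1 x + α2 x)) l (nhds (c / (5 / 6 * τ ^ 2))) := by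
    intro g c hg
    have hdiv := hg.div hsum hden
    refine hdiv.congr' ?_
    filter_upwards [hpos] with x hx
    have hb : (β0 x) ^ 2 ≠ 0 := pow_ne_zero 2 hx.1.ne'
    simp only [Pi.div_apply]
    rw [show (β0 x) ^ 2 * α0 x + (β0 x) ^ 2 * α1 x + (β0 x) ^ 2 * α2 x
        = (β0 x) ^ 2 * (α0 x + α1 x + α2 x) by ring,
      mul_div_mul_left _ _ hb]
  refine ⟨?_, ?_, ?_⟩
  · have := key α0 (τ ^ 2 / 6) hg0
    convert this using 2
    field_simp
  · have := key α1 (2 / 3 * τ ^ 2) hg1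
    convert this using 2
    field_simp
    ring
  · have := key α2 0 hg2
    simpa using this
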